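/- For x, y ∈ ℝ^n, the equality xᵀN x = yᵀN y holds for all positive semidefinite matrices N ∈ S₊^n if, and only if, x = α y for some α ∈ {−1, +1}, or x = y = 0. -/

import Mathlib

open Matrix

lemma quad_vecMulVec (n : ℕ) (v u : Fin n → ℝ) :
    u ⬝ᵥ (vecMulVec v v *ᵥ u) = (v ⬝ᵥ u) * (v ⬝ᵥ u) := by
  simp only [dotProduct, mulVec, vecMulVec_apply, Finset.sum_mul, Finset.mul_sum]
  apply Finset.sum_congr rfl; intro i _
  apply Finset.sum_congr rfl; intro j _
  ring

lemma psd_vecMulVec (n : ℕ) (v : Fin n → ℝ) : (vecMulVec v v).PosSemidef := by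
  refine Matrix.PosSemidef.of_dotProduct_mulVec_nonneg ?_ ?_
  · ext i j
    simp [vecMulVec_apply, Matrix.conjTranspose_apply, mul_comm]
  · intro u
    simpa [quad_vecMulVec] using mul_self_nonneg (v ⬝ᵥ u)

/-- `xᵀNx = yᵀNy` holds for all positive semidefinite matrices `N` iff
`x = α • y` for some `α ∈ {-1, +1}`, or `x = y = 0`. -/
theorem quadForm_eq_iff_pm (n : ℕ) (x y : Fin n → ℝ) :
    (∀ N : Matrix (Fin n) (Fin n) ℝ, N.PosSemidef →
      x ⬝ᵥ (N *ᵥ x) = y ⬝ᵥ (N *ᵥ y)) ↔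
    ((∃ α : ℝ, (α = -1 ∨ α = 1) ∧ x = α • y) ∨ (x = 0 ∧ y = 0)) := by
  constructor
  · intro h
    have h1 := h 1 Matrix.PosSemidef.one
    simp only [Matrix.one_mulVec] at h1
    have hx := h (vecMulVec x x) (psd_vecMulVec n x)
    rw [quad_vecMulVec, quad_vecMulVec] at hx
    have hcomm : y ⬝ᵥ x = x ⬝ᵥ y := dotProduct_comm y x
    left
    rcases mul_self_eq_mul_self_iff.mp hx with hc | hc
    · refine ⟨1, Or.inr rfl, ?_⟩
      rw [one_smul]
      have hz : (x - y) ⬝ᵥ (x - y) = 0 := by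
        simp only [sub_dotProduct, dotProduct_sub]
        linarith
      exact sub_eq_zero.mp (dotProduct_self_eq_zero.mp hz)
    · refine ⟨-1, Or.inl rfl, ?_⟩
      have hz : (x + y) ⬝ᵥ (x + y) = 0 := by
        simp only [add_dotProduct, dotProduct_add]
        linarith
      have hxy : x + y = 0 := dotProduct_self_eq_zero.mp hz
      rw [neg_one_smul]
      exact eq_neg_of_add_eq_zero_left hxy
  · rintro (⟨α, hα, rfl⟩ | ⟨rfl, rfl⟩)
    · intro N _
      have hα2 : α * α = 1 := by rcases hα with h | h <;> rw [h] <;> ring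
      rw [Matrix.mulVec_smul, dotProduct_smul, smul_dotProduct,
        smul_smul, hα2, one_smul]
    · intro N _; rfl
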